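/- For every integer n ≥ 0, there is no matrix P ∈ GL₂(ℤ) such that Pᵀ · [[-2n-4, -1], [-1, -8]] · P has some diagonal entry equal to -2. Equivalently, the integral quadratic form with matrix [[-2n-4, -1], [-1, -8]] is not ℤ-equivalent to any integral form representing -2. -/
import Mathlib


open Matrix

theorem stmt_11 (n : ℤ) (hn : 0 ≤ n) :
    ¬ ∃ (P : Matrix.GeneralLinearGroup (Fin 2) ℤ) (i : Fin 2),
      ((P : Matrix (Fin 2) (Fin 2) ℤ)ᵀ * !![-2 * n - 4, -1; -1, -8] *
        (P : Matrix (Fin 2) (Fin 2) ℤ)) i i = -2 := by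
  rintro ⟨P, i, h⟩
  set a := (P : Matrix (Fin 2) (Fin 2) ℤ) 0 i with ha
  set b := (P : Matrix (Fin 2) (Fin 2) ℤ) 1 i with hb
  simp only [Matrix.mul_apply, Fin.sum_univ_two, Matrix.transpose_apply,
    Matrix.cons_val', Matrix.cons_val_zero, Matrix.cons_val_one, Matrix.head_cons,
    Matrix.empty_val', Matrix.cons_val_fin_one, Matrix.head_fin_const] at h
  norm_num at h
  rw [← ha, ← hb] at h
  rcases eq_or_ne b 0 with hb0 | hb0
  · rcases eq_or_ne a 0 with ha0 | ha0
    · rw [ha0, hb0] at h; norm_num at h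
    · have h1 : 1 ≤ a ^ 2 := by
        have := Int.one_le_abs (by simpa using ha0)
        nlinarith [sq_abs a]
      rw [hb0] at h
      nlinarith [mul_nonneg hn (sq_nonneg a)]
  · have h1 : 1 ≤ b ^ 2 := by
      have := Int.one_le_abs (by simpa using hb0)
      nlinarith [sq_abs b]
    nlinarith [mul_nonneg hn (sq_nonneg a), sq_nonneg (2 * a + b), sq_nonneg a]
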